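/- arXiv:2108.10338 — 2 statements merged into one kernel-verified Lean document; each statement's English description precedes it below -/
import Mathlib

section
/- Let M be a ℤ-graded, bounded below module over the Weyl algebra A₁ = ℚ[t,∂] (with ∂t - t∂ = 1, ∂ of degree +1 and t of degree -1), and let V ⊂ M be a graded subspace with M = V ⊕ ∂(M). Then M = ⊕_{n ≥ 0} ∂^n(V); in particular M is a free ℚ[∂]-module. -/
open DirectSum

section StmtAux

variable {V : Type*} [AddCommGroup V] [Module ℚ V]

/-- The degree-`d` projection associated to a decomposition. -/
noncomputable def stmtPr (ℳ : ℤ → Submodule ℚ V) [DirectSum.Decomposition ℳ] (d : ℤ) :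
    V →ₗ[ℚ] V :=
  (ℳ d).subtype ∘ₗ (DirectSum.component ℚ ℤ (fun i => ↥(ℳ i)) d) ∘ₗ
    (DirectSum.decomposeLinearEquiv ℳ).toLinearMap

lemma stmtPr_apply (ℳ : ℤ → Submodule ℚ V) [DirectSum.Decomposition ℳ] (d : ℤ) (x : V) :
    stmtPr ℳ d x = (DirectSum.decompose ℳ x d : V) := rfl

lemma stmtPr_mem (ℳ : ℤ → Submodule ℚ V) [DirectSum.Decomposition ℳ] (d : ℤ) (x : V) :
    stmtPr ℳ d x ∈ ℳ d := (DirectSum.decompose ℳ x d).2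

lemma stmtPr_of_mem_same (ℳ : ℤ → Submodule ℚ V) [DirectSum.Decomposition ℳ] {d : ℤ} {x : V}
    (hx : x ∈ ℳ d) : stmtPr ℳ d x = x := DirectSum.decompose_of_mem_same ℳ hx

lemma stmtPr_of_mem_ne (ℳ : ℤ → Submodule ℚ V) [DirectSum.Decomposition ℳ] {d e : ℤ} {x : V}
    (hx : x ∈ ℳ e) (h : e ≠ d) : stmtPr ℳ d x = 0 := DirectSum.decompose_of_mem_ne ℳ hx h

lemma stmt_sum_pr (ℳ : ℤ → Submodule ℚ V) [DirectSum.Decomposition ℳ]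
    [∀ (i : ℤ) (x : ℳ i), Decidable (x ≠ 0)] (x : V) :
    ∑ d ∈ (DirectSum.decompose ℳ x).support, stmtPr ℳ d x = x := by
  simpa [stmtPr_apply] using DirectSum.sum_support_decompose ℳ x

/-- Projection commutes with a homogeneous operator of degree `c`. -/
lemma stmtPr_comm (ℳ : ℤ → Submodule ℚ V) [DirectSum.Decomposition ℳ]
    (A : Module.End ℚ V) (c : ℤ) (hA : ∀ n : ℤ, ∀ x ∈ ℳ n, A x ∈ ℳ (n + c))
    (d : ℤ) (x : V) : stmtPr ℳ (d + c) (A x) = A (stmtPr ℳ d x) := by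
  classical
  calc stmtPr ℳ (d + c) (A x)
      = ∑ i ∈ (DirectSum.decompose ℳ x).support, stmtPr ℳ (d + c) (A (stmtPr ℳ i x)) := by
        conv_lhs => rw [← stmt_sum_pr ℳ x]
        rw [map_sum, map_sum]
    _ = stmtPr ℳ (d + c) (A (stmtPr ℳ d x)) := by
        refine Finset.sum_eq_single d (fun i _ hi => ?_) (fun hd => ?_)
        · exact stmtPr_of_mem_ne ℳ (hA i _ (stmtPr_mem ℳ i x)) (by omega)
        · have h0 : stmtPr ℳ d x = 0 := by
            rw [stmtPr_apply, DFinsupp.notMem_support_iff.mp hd, ZeroMemClass.coe_zero]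
          rw [h0, map_zero, map_zero]
    _ = A (stmtPr ℳ d x) := stmtPr_of_mem_same ℳ (hA d _ (stmtPr_mem ℳ d x))

end StmtAux


section StmtAux2

variable {V : Type*} [AddCommGroup V] [Module ℚ V]

lemma stmt_comm_pow (D T : Module.End ℚ V) (hcomm : D * T - T * D = 1) :
    ∀ k : ℕ, D * T ^ (k + 1) = T ^ (k + 1) * D + ((k + 1 : ℕ) : Module.End ℚ V) * T ^ k := by
  have h1 : D * T = T * D + 1 := sub_eq_iff_eq_add'.mp hcomm
  intro k
  induction k with
  | zero => simpa using h1
  | succ k ih =>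
    have step : D * T ^ (k + 2) = (D * T ^ (k + 1)) * T := by
      rw [mul_assoc, ← pow_succ]
    rw [step, ih, add_mul, mul_assoc (T ^ (k + 1)) D T, h1, mul_add, mul_one,
      ← mul_assoc (T ^ (k + 1)) T D, ← pow_succ, mul_assoc ((k + 1 : ℕ) : Module.End ℚ V),
      ← pow_succ]
    push_cast
    noncomm_ring

lemma stmt_T_pow (ℳ : ℤ → Submodule ℚ V) (T : Module.End ℚ V)
    (hT : ∀ n, (ℳ n).map T ≤ ℳ (n - 1)) :
    ∀ (k : ℕ) (n : ℤ), ∀ x ∈ ℳ n, (T ^ k) x ∈ ℳ (n - k) := by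
  intro k
  induction k with
  | zero => intro n x hx; simpa using hx
  | succ k ih =>
    intro n x hx
    have h1 : T x ∈ ℳ (n - 1) := hT n ⟨x, hx, rfl⟩
    have h2 := ih (n - 1) (T x) h1
    have h3 : (T ^ (k + 1)) x = (T ^ k) (T x) := by
      rw [pow_succ, Module.End.mul_apply]
    rw [h3]
    convert h2 using 2
    push_cast
    ring

/-- `D` is injective on `T`-nilpotent vectors. -/
lemma stmt_D_inj_of_nilpotent (D T : Module.End ℚ V) (hcomm : D * T - T * D = 1) :
    ∀ (k : ℕ) (m : V), (T ^ k) m = 0 → D m = 0 → m = 0 := by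
  intro k
  induction k with
  | zero => intro m hm _; simpa using hm
  | succ k ih =>
    intro m hm hD
    have h : D ((T ^ (k + 1)) m) = (T ^ (k + 1)) (D m) + (k + 1 : ℕ) • ((T ^ k) m) := by
      calc D ((T ^ (k + 1)) m) = (D * T ^ (k + 1)) m := rfl
        _ = (T ^ (k + 1) * D + ((k + 1 : ℕ) : Module.End ℚ V) * T ^ k) m := by
            rw [stmt_comm_pow D T hcomm k]
        _ = (T ^ (k + 1)) (D m) + (k + 1 : ℕ) • ((T ^ k) m) := by
            simp [LinearMap.add_apply, Module.End.mul_apply, Module.End.natCast_apply, succ_nsmul]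
    rw [hm, hD, map_zero, map_zero, zero_add] at h
    have h2 : ((k + 1 : ℕ)) • ((T ^ k) m) = 0 := h.symm
    have h3 : ((k + 1 : ℚ)) • ((T ^ k) m) = 0 := by
      rw [← Nat.cast_smul_eq_nsmul ℚ] at h2
      exact_mod_cast h2
    have h4 : (T ^ k) m = 0 := by
      have : ((k + 1 : ℚ)) ≠ 0 := by positivity
      exact (smul_eq_zero.mp h3).resolve_left this
    exact ih m h4 hD

lemma stmt_bottom_sums (D : Module.End ℚ V) (V' : Submodule ℚ V)
    (hdisj : Disjoint V' (LinearMap.range D)) (hDinj : Function.Injective D) :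
    ∀ (N : ℕ) (v : ℕ → V), (∀ n, v n ∈ V') →
      (∑ n ∈ Finset.range N, (D ^ n) (v n)) = 0 → ∀ n < N, v n = 0 := by
  intro N
  induction N with
  | zero => intro v _ _ n hn; omega
  | succ N ih =>
    intro v hv hsum n hn
    rw [Finset.sum_range_succ'] at hsum
    have hw : (∑ i ∈ Finset.range N, (D ^ (i + 1)) (v (i + 1))) =
        D (∑ i ∈ Finset.range N, (D ^ i) (v (i + 1))) := by
      rw [map_sum]
      refine Finset.sum_congr rfl fun i _ => ?_
      rw [pow_succ', Module.End.mul_apply]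
    have h0 : (D ^ (0 : ℕ)) (v 0) = v 0 := by simp
    rw [hw, h0] at hsum
    set w := ∑ i ∈ Finset.range N, (D ^ i) (v (i + 1)) with hwdef
    have hv0 : v 0 = D (-w) := by
      rw [map_neg]
      exact eq_neg_of_add_eq_zero_right hsum
    have hv0' : v 0 ∈ LinearMap.range D := ⟨-w, hv0.symm⟩
    have hv00 : v 0 = 0 := by
      have := hdisj.le_bot ⟨hv 0, hv0'⟩
      simpa using this
    have hDw : D w = 0 := by
      rw [hv00, add_zero] at hsum; exact hsum
    have hw0 : w = 0 := by
      apply hDinj; rw [hDw, map_zero]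
    have := ih (fun i => v (i + 1)) (fun i => hv (i + 1)) hw0
    rcases n with _ | n
    · exact hv00
    · exact this n (by omega)

end StmtAux2

/-- A bounded-below ℤ-graded module over the Weyl algebra (with `D` of degree `+1`, `t` of
degree `-1`, `D t - t D = 1`) is the internal direct sum `⊕_{n ≥ 0} D^n(V')` for any graded
complement `V'` of the image of `D`. -/
theorem stmt_3 {V : Type*} [AddCommGroup V] [Module ℚ V]
    (ℳ : ℤ → Submodule ℚ V) (hdecomp : DirectSum.IsInternal ℳ)
    (n₀ : ℤ) (hbdd : ∀ n < n₀, ℳ n = ⊥)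
    (D T : Module.End ℚ V)
    (hD : ∀ n, (ℳ n).map D ≤ ℳ (n + 1))
    (hT : ∀ n, (ℳ n).map T ≤ ℳ (n - 1))
    (hcomm : D * T - T * D = 1)
    (V' : Submodule ℚ V)
    (hgraded : V' = ⨆ n : ℤ, V' ⊓ ℳ n)
    (hcompl : IsCompl V' (LinearMap.range D)) :
    DirectSum.IsInternal (fun n : ℕ => V'.map (D ^ n)) := by
  classical
  letI : DirectSum.Decomposition ℳ := hdecomp.chooseDecomposition
  have hD' : ∀ n : ℤ, ∀ x ∈ ℳ n, D x ∈ ℳ (n + 1) := fun n x hx => hD n ⟨x, hx, rfl⟩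
  set S : Submodule ℚ V := ⨆ n : ℕ, V'.map (D ^ n) with hS
  have hV'S : V' ≤ S := by
    have h0 : V'.map (D ^ 0) = V' := by
      rw [pow_zero, Module.End.one_eq_id, Submodule.map_id]
    calc V' = V'.map (D ^ 0) := h0.symm
      _ ≤ S := le_iSup (fun n : ℕ => V'.map (D ^ n)) 0
  have hDS : ∀ x ∈ S, D x ∈ S := by
    intro x hx
    have hmap : S.map D ≤ S := by
      rw [hS, Submodule.map_iSup]
      refine iSup_le fun n => ?_
      rw [← Submodule.map_comp]
      have hcompm : D ∘ₗ (D ^ n) = D ^ (n + 1) := by rw [pow_succ']; rfl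
      rw [hcompm]
      exact le_iSup (fun n : ℕ => V'.map (D ^ n)) (n + 1)
    exact hmap ⟨x, hx, rfl⟩
  have hTk := stmt_T_pow ℳ T hT
  have hDinj : Function.Injective D := by
    rw [injective_iff_map_eq_zero]
    intro m hm
    have hcomps : ∀ d : ℤ, stmtPr ℳ d m = 0 := by
      intro d
      have hDc : D (stmtPr ℳ d m) = 0 := by
        rw [← stmtPr_comm ℳ D 1 hD' d m, hm, map_zero]
      have hk : (T ^ (d - n₀ + 1).toNat) (stmtPr ℳ d m) = 0 := by
        have hmem := hTk (d - n₀ + 1).toNat d _ (stmtPr_mem ℳ d m)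
        rw [hbdd (d - ((d - n₀ + 1).toNat : ℤ)) (by omega)] at hmem
        simpa using hmem
      exact stmt_D_inj_of_nilpotent D T hcomm _ _ hk hDc
    calc m = ∑ d ∈ (DirectSum.decompose ℳ m).support, stmtPr ℳ d m := (stmt_sum_pr ℳ m).symm
      _ = 0 := Finset.sum_eq_zero fun d _ => hcomps d
  have hMS : ∀ d : ℤ, ℳ d ≤ S := by
    have key : ∀ k : ℕ, ∀ d : ℤ, d < n₀ + k → ℳ d ≤ S := by
      intro k
      induction k with
      | zero => intro d hd; rw [hbdd d (by omega)]; exact bot_le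
      | succ k ih =>
        intro d hd m hm
        have hmem : m ∈ V' ⊔ LinearMap.range D := by
          rw [hcompl.codisjoint.eq_top]; trivial
        obtain ⟨v, hv, r, hr, rfl⟩ := Submodule.mem_sup.mp hmem
        obtain ⟨x, rfl⟩ := hr
        have heq : v + D x = stmtPr ℳ d v + D (stmtPr ℳ (d - 1) x) := by
          have h1 : stmtPr ℳ d (v + D x) = v + D x := stmtPr_of_mem_same ℳ hm
          have h2 : stmtPr ℳ d (D x) = D (stmtPr ℳ (d - 1) x) := by
            have h3 := stmtPr_comm ℳ D 1 hD' (d - 1) x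
            rw [show d - 1 + 1 = d by ring] at h3
            exact h3
          rw [map_add, h2] at h1
          exact h1.symm
        rw [heq]
        refine S.add_mem (hV'S ?_) (hDS _ (ih (d - 1) (by omega) (stmtPr_mem ℳ (d - 1) x)))
        have hv' : v ∈ ⨆ n : ℤ, V' ⊓ ℳ n := hgraded ▸ hv
        refine Submodule.iSup_induction _ (motive := fun y => stmtPr ℳ d y ∈ V') hv' ?_ ?_ ?_
        · intro n y hy
          by_cases hnd : n = d
          · rw [stmtPr_of_mem_same ℳ (show y ∈ ℳ d from hnd ▸ hy.2)]; exact hy.1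
          · rw [stmtPr_of_mem_ne ℳ hy.2 hnd]; exact V'.zero_mem
        · show stmtPr ℳ d (0 : V) ∈ V'
          rw [map_zero]; exact V'.zero_mem
        · intro y z hy hz; rw [map_add]; exact V'.add_mem hy hz
    intro d
    exact key (d - n₀ + 1).toNat d (by omega)
  have hSup : (⨆ n : ℕ, V'.map (D ^ n)) = ⊤ := by
    rw [eq_top_iff, ← hdecomp.submodule_iSup_eq_top]
    exact iSup_le hMS
  refine DirectSum.isInternal_submodule_of_iSupIndep_of_iSup_eq_top ?_ hSup
  rw [iSupIndep_iff_dfinsupp_lsum_injective]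
  rw [injective_iff_map_eq_zero]
  intro f hf
  set N : ℕ := (f.support.sup id) + 1 with hN
  have hsupp : ∀ n : ℕ, n ∉ Finset.range N → f n = 0 := by
    intro n hn
    by_contra h
    have hns : n ∈ f.support := DFinsupp.mem_support_iff.mpr h
    have hle := Finset.le_sup (f := id) hns
    simp only [Finset.mem_range, not_lt, id] at hn hle
    omega
  have hrange : f.support ⊆ Finset.range N := by
    intro n hn
    have hle := Finset.le_sup (f := id) hn
    simp only [Finset.mem_range, id] at hle ⊢
    omega
  have hex : ∀ n : ℕ, ∃ y, y ∈ V' ∧ (D ^ n) y = ((f n : V)) := fun n =>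
    Submodule.mem_map.mp (f n).2
  choose v hvV' hvD using hex
  have hls : (DFinsupp.lsum ℕ fun i => (V'.map (D ^ i)).subtype) f
      = ∑ n ∈ f.support, ((f n : V)) := by
    simp [DFinsupp.lsum_apply_apply, DFinsupp.sumAddHom_apply, DFinsupp.sum]
  have hsum : ∑ n ∈ Finset.range N, (D ^ n) (v n) = 0 := by
    have h1 : ∑ n ∈ Finset.range N, (D ^ n) (v n) = ∑ n ∈ Finset.range N, ((f n : V)) :=
      Finset.sum_congr rfl fun n _ => hvD n
    have h2 : ∑ n ∈ f.support, ((f n : V)) = ∑ n ∈ Finset.range N, ((f n : V)) :=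
      Finset.sum_subset hrange (by
        intro x _ hx
        rw [DFinsupp.notMem_support_iff.mp hx, ZeroMemClass.coe_zero])
    rw [h1, ← h2, ← hls, hf]
  have hv0 := stmt_bottom_sums D V' hcompl.disjoint hDinj N v hvV' hsum
  have hfn : ∀ n : ℕ, f n = 0 := by
    intro n
    by_cases hn : n < N
    · have hc : ((f n : V)) = 0 := by
        rw [← hvD n, hv0 n hn, map_zero]
      exact Subtype.ext (by simpa using hc)
    · exact hsupp n (by simpa using hn)
  ext n
  simp [hfn n]
end

section
/- Let L = ℤ^I with a symmetric bilinear form χ, and define the shuffle product on ⊕_{d ∈ ℕ^I} Λ_d (with Λ_d the Σ_d-symmetric polynomials in variables x_{i,k}, i ∈ I, 1 ≤ k ≤ d_i) by (f*g)(x) = ∑_{σ ∈ Sh(d,e)} σ(f·g·K) where K(x,y) = ∏_{i,j∈I} ∏_{k=1}^{d_i} ∏_{l=1}^{e_j} (y_{j,l} − x_{i,k})^{−χ(e_i,e_j)}. Then f*g = (−1)^{χ(d,e)} g*f for f ∈ Λ_d, g ∈ Λ_e. -/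
open MvPolynomial
lemma aux_neg_zpow {α : Type*} [Field α] (a : α) (n : ℤ) :
    (-a) ^ n = (-1 : α) ^ n * a ^ n := by
  rcases Int.even_or_odd n with h | h
  · rw [h.neg_zpow, h.neg_one_zpow, one_mul]
  · rw [h.neg_zpow, h.neg_one_zpow, neg_one_mul]

lemma aux_neg_one_zpow_neg {α : Type*} [Field α] (n : ℤ) :
    (-1 : α) ^ (-n) = (-1 : α) ^ n := by
  rw [zpow_neg, ← inv_zpow, inv_neg_one]

lemma aux_zpow_sum {α β : Type*} [Field α] (a : α) (ha : a ≠ 0) (s : Finset β) (f : β → ℤ) :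
    a ^ (∑ i ∈ s, f i) = ∏ i ∈ s, a ^ f i := by
  classical
  induction s using Finset.cons_induction with
  | empty => simp
  | cons x s hx ih => rw [Finset.sum_cons, Finset.prod_cons, zpow_add₀ ha, ih]


lemma aux_neg_one_zpow_mul_nat {α : Type*} [Field α] (m : ℤ) (n : ℕ) :
    ((-1 : α) ^ m) ^ n = (-1 : α) ^ (m * n) := by
  induction n with
  | zero => simp
  | succ k ih =>
    rw [pow_succ, ih, ← zpow_add₀ (by norm_num : (-1 : α) ≠ 0)]
    congr 1
    push_cast
    ring

lemma aux_sign_block {α : Type*} [Field α] (m : ℤ) (a b : ℕ) :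
    (∏ _k : Fin a, ∏ _l : Fin b, (-1 : α) ^ (-m)) = (-1 : α) ^ (m * (a : ℤ) * (b : ℤ)) := by
  rw [Finset.prod_const, Finset.prod_const, Finset.card_univ, Fintype.card_fin,
    Finset.card_univ, Fintype.card_fin, ← pow_mul, aux_neg_one_zpow_mul_nat]
  have h : (-m) * ((b * a : ℕ) : ℤ) = -(m * (a : ℤ) * (b : ℤ)) := by push_cast; ring
  rw [h, aux_neg_one_zpow_neg]


/-- Supercommutativity of the shuffle product of the CoHA of a symmetric quiver:
`f * g = (−1)^{χ(d,e)} g * f` for `f ∈ Λ_d`, `g ∈ Λ_e`, where the shuffle product is computed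
in the fraction field of the polynomial ring on the variables `x_{i,k}`, `i ∈ I`,
`1 ≤ k ≤ d_i + e_i`, with kernel `K(x,y) = ∏ (y_{j,l} − x_{i,k})^{−χ(i,j)}`. -/
theorem stmt_7 {I : Type} [Fintype I] [DecidableEq I]
    (χ : I → I → ℤ) (hχ : ∀ i j, χ i j = χ j i) (d e : I → ℕ)
    (f : MvPolynomial ((i : I) × Fin (d i)) ℚ)
    (g : MvPolynomial ((i : I) × Fin (e i)) ℚ)
    (hf : ∀ σ : (i : I) → Equiv.Perm (Fin (d i)),
      rename (fun p : (i : I) × Fin (d i) =>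
        (⟨p.1, σ p.1 p.2⟩ : (i : I) × Fin (d i))) f = f)
    (hg : ∀ σ : (i : I) → Equiv.Perm (Fin (e i)),
      rename (fun p : (i : I) × Fin (e i) =>
        (⟨p.1, σ p.1 p.2⟩ : (i : I) × Fin (e i))) g = g) :
    -- the ambient field of rational functions in the variables `x_{i,k}`, `k < d i + e i`
    let V := (i : I) × Fin (d i + e i)
    let R := MvPolynomial V ℚ
    let F := FractionRing R
    let ι : R →+* F := algebraMap R F
    -- the action of block permutations on rational functions
    let act : ((i : I) → Equiv.Perm (Fin (d i + e i))) → F ≃+* F := fun σ =>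
      IsFractionRing.ringEquivOfRingEquiv
        ((renameEquiv ℚ (Equiv.sigmaCongrRight σ)).toRingEquiv)
    -- positions of the `d`-block followed by the `e`-block, and of the `e`-block followed by
    -- the `d`-block, inside `Fin (d i + e i)`
    let posDL : (i : I) → Fin (d i) → Fin (d i + e i) := fun i k => Fin.castAdd (e i) k
    let posER : (i : I) → Fin (e i) → Fin (d i + e i) := fun i l => Fin.natAdd (d i) l
    let posEL : (i : I) → Fin (e i) → Fin (d i + e i) := fun i l =>
      Fin.cast (Nat.add_comm (e i) (d i)) (Fin.castAdd (d i) l)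
    let posDR : (i : I) → Fin (d i) → Fin (d i + e i) := fun i k =>
      Fin.cast (Nat.add_comm (e i) (d i)) (Fin.natAdd (e i) k)
    -- the two kernels
    let K₁ : F := ∏ i : I, ∏ j : I, ∏ k : Fin (d i), ∏ l : Fin (e j),
      (ι (X ⟨j, posER j l⟩) - ι (X ⟨i, posDL i k⟩)) ^ (-(χ i j))
    let K₂ : F := ∏ i : I, ∏ j : I, ∏ k : Fin (e i), ∏ l : Fin (d j),
      (ι (X ⟨j, posDR j l⟩) - ι (X ⟨i, posEL i k⟩)) ^ (-(χ i j))
    -- `f` and `g` placed on the respective blocks of variables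
    let fV : F := ι (rename (fun p : (i : I) × Fin (d i) => (⟨p.1, posDL p.1 p.2⟩ : V)) f)
    let gV : F := ι (rename (fun p : (i : I) × Fin (e i) => (⟨p.1, posER p.1 p.2⟩ : V)) g)
    let gV' : F := ι (rename (fun p : (i : I) × Fin (e i) => (⟨p.1, posEL p.1 p.2⟩ : V)) g)
    let fV' : F := ι (rename (fun p : (i : I) × Fin (d i) => (⟨p.1, posDR p.1 p.2⟩ : V)) f)
    -- the sets of `(d,e)`-shuffles and `(e,d)`-shuffles
    let Sh₁ : Finset ((i : I) → Equiv.Perm (Fin (d i + e i))) :=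
      Finset.univ.filter (fun σ => ∀ i,
        (∀ k k' : Fin (d i), k < k' → σ i (posDL i k) < σ i (posDL i k')) ∧
        (∀ l l' : Fin (e i), l < l' → σ i (posER i l) < σ i (posER i l')))
    let Sh₂ : Finset ((i : I) → Equiv.Perm (Fin (d i + e i))) :=
      Finset.univ.filter (fun σ => ∀ i,
        (∀ l l' : Fin (e i), l < l' → σ i (posEL i l) < σ i (posEL i l')) ∧
        (∀ k k' : Fin (d i), k < k' → σ i (posDR i k) < σ i (posDR i k')))
    -- supercommutativity `f * g = (−1)^{χ(d,e)} g * f`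
    (∑ σ ∈ Sh₁, act σ (fV * gV * K₁)) =
      (-1 : F) ^ (∑ i : I, ∑ j : I, χ i j * (d i : ℤ) * (e j : ℤ)) *
        ∑ σ ∈ Sh₂, act σ (gV' * fV' * K₂) := by
  intro V R F ι act posDL posER posEL posDR K₁ K₂ fV gV gV' fV' Sh₁ Sh₂
  classical
  set c : ℤ := ∑ i : I, ∑ j : I, χ i j * (d i : ℤ) * (e j : ℤ) with hc
  -- the block swap permutation
  set ρ : (i : I) → Equiv.Perm (Fin (d i + e i)) := fun i =>
    (finAddFlip (m := d i) (n := e i)).trans (finCongr (Nat.add_comm (e i) (d i))) with hρ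
  have hρDL : ∀ i k, ρ i (posDL i k) = posDR i k := by
    intro i k
    simp [hρ, posDL, posDR]
  have hρER : ∀ i l, ρ i (posER i l) = posEL i l := by
    intro i l
    simp [hρ, posER, posEL]
  -- expansion of the action
  have hact : ∀ (σ : (i : I) → Equiv.Perm (Fin (d i + e i))) (p : R),
      act σ (ι p) = ι (rename (fun v : V => (⟨v.1, σ v.1 v.2⟩ : V)) p) := by
    intro σ p
    show IsFractionRing.ringEquivOfRingEquiv _ (algebraMap R F p) = _
    rw [IsFractionRing.ringEquivOfRingEquiv_algebraMap]
    congr 1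
  have expand : ∀ (σ : (i : I) → Equiv.Perm (Fin (d i + e i))),
      act σ (fV * gV * K₁) =
        ι (rename (fun p : (i : I) × Fin (d i) => (⟨p.1, σ p.1 (posDL p.1 p.2)⟩ : V)) f) *
        ι (rename (fun p : (i : I) × Fin (e i) => (⟨p.1, σ p.1 (posER p.1 p.2)⟩ : V)) g) *
        ∏ i : I, ∏ j : I, ∏ k : Fin (d i), ∏ l : Fin (e j),
          (ι (X ⟨j, σ j (posER j l)⟩) - ι (X ⟨i, σ i (posDL i k)⟩)) ^ (-(χ i j)) := by
    intro σ
    rw [map_mul, map_mul]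
    congr 1
    · congr 1
      · rw [show fV = ι (rename (fun p : (i : I) × Fin (d i) => (⟨p.1, posDL p.1 p.2⟩ : V)) f) from rfl,
          hact, rename_rename]
        rfl
      · rw [show gV = ι (rename (fun p : (i : I) × Fin (e i) => (⟨p.1, posER p.1 p.2⟩ : V)) g) from rfl,
          hact, rename_rename]
        rfl
    · rw [show K₁ = ∏ i : I, ∏ j : I, ∏ k : Fin (d i), ∏ l : Fin (e j),
          (ι (X ⟨j, posER j l⟩) - ι (X ⟨i, posDL i k⟩)) ^ (-(χ i j)) from rfl]
      rw [map_prod]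
      refine Finset.prod_congr rfl fun i _ => ?_
      rw [map_prod]
      refine Finset.prod_congr rfl fun j _ => ?_
      rw [map_prod]
      refine Finset.prod_congr rfl fun k _ => ?_
      rw [map_prod]
      refine Finset.prod_congr rfl fun l _ => ?_
      rw [map_zpow₀, map_sub, hact, hact, rename_X, rename_X]
  have expand' : ∀ (σ : (i : I) → Equiv.Perm (Fin (d i + e i))),
      act σ (gV' * fV' * K₂) =
        ι (rename (fun p : (i : I) × Fin (e i) => (⟨p.1, σ p.1 (posEL p.1 p.2)⟩ : V)) g) *
        ι (rename (fun p : (i : I) × Fin (d i) => (⟨p.1, σ p.1 (posDR p.1 p.2)⟩ : V)) f) *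
        ∏ i : I, ∏ j : I, ∏ k : Fin (e i), ∏ l : Fin (d j),
          (ι (X ⟨j, σ j (posDR j l)⟩) - ι (X ⟨i, σ i (posEL i k)⟩)) ^ (-(χ i j)) := by
    intro σ
    rw [map_mul, map_mul]
    congr 1
    · congr 1
      · rw [show gV' = ι (rename (fun p : (i : I) × Fin (e i) => (⟨p.1, posEL p.1 p.2⟩ : V)) g) from rfl,
          hact, rename_rename]
        rfl
      · rw [show fV' = ι (rename (fun p : (i : I) × Fin (d i) => (⟨p.1, posDR p.1 p.2⟩ : V)) f) from rfl,
          hact, rename_rename]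
        rfl
    · rw [show K₂ = ∏ i : I, ∏ j : I, ∏ k : Fin (e i), ∏ l : Fin (d j),
          (ι (X ⟨j, posDR j l⟩) - ι (X ⟨i, posEL i k⟩)) ^ (-(χ i j)) from rfl]
      rw [map_prod]
      refine Finset.prod_congr rfl fun i _ => ?_
      rw [map_prod]
      refine Finset.prod_congr rfl fun j _ => ?_
      rw [map_prod]
      refine Finset.prod_congr rfl fun k _ => ?_
      rw [map_prod]
      refine Finset.prod_congr rfl fun l _ => ?_
      rw [map_zpow₀, map_sub, hact, hact, rename_X, rename_X]
  -- the key pointwise identity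
  have key : ∀ τ : (i : I) → Equiv.Perm (Fin (d i + e i)),
      act (fun i => τ i * ρ i) (fV * gV * K₁) = (-1 : F) ^ c * act τ (gV' * fV' * K₂) := by
    intro τ
    rw [expand (fun i => τ i * ρ i), expand' τ]
    simp only [Equiv.Perm.mul_apply, hρDL, hρER]
    have hP : (∏ i : I, ∏ j : I, ∏ k : Fin (d i), ∏ l : Fin (e j),
          (ι (X ⟨j, τ j (posEL j l)⟩) - ι (X ⟨i, τ i (posDR i k)⟩)) ^ (-(χ i j)))
        = (-1 : F) ^ c *
          ∏ i : I, ∏ j : I, ∏ k : Fin (e i), ∏ l : Fin (d j),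
          (ι (X ⟨j, τ j (posDR j l)⟩) - ι (X ⟨i, τ i (posEL i k)⟩)) ^ (-(χ i j)) := by
      calc (∏ i : I, ∏ j : I, ∏ k : Fin (d i), ∏ l : Fin (e j),
            (ι (X ⟨j, τ j (posEL j l)⟩) - ι (X ⟨i, τ i (posDR i k)⟩)) ^ (-(χ i j)))
          = ∏ i : I, ∏ j : I, ∏ k : Fin (d i), ∏ l : Fin (e j),
            ((-1 : F) ^ (-(χ i j)) *
              (ι (X ⟨i, τ i (posDR i k)⟩) - ι (X ⟨j, τ j (posEL j l)⟩)) ^ (-(χ i j))) := by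
            refine Finset.prod_congr rfl fun i _ => Finset.prod_congr rfl fun j _ =>
              Finset.prod_congr rfl fun k _ => Finset.prod_congr rfl fun l _ => ?_
            rw [← neg_sub, aux_neg_zpow]
        _ = (∏ i : I, ∏ j : I, ∏ _k : Fin (d i), ∏ _l : Fin (e j), (-1 : F) ^ (-(χ i j))) *
            (∏ i : I, ∏ j : I, ∏ k : Fin (d i), ∏ l : Fin (e j),
              (ι (X ⟨i, τ i (posDR i k)⟩) - ι (X ⟨j, τ j (posEL j l)⟩)) ^ (-(χ i j))) := by
            simp only [Finset.prod_mul_distrib]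
        _ = (-1 : F) ^ c *
            (∏ i : I, ∏ j : I, ∏ k : Fin (e i), ∏ l : Fin (d j),
              (ι (X ⟨j, τ j (posDR j l)⟩) - ι (X ⟨i, τ i (posEL i k)⟩)) ^ (-(χ i j))) := by
            congr 1
            · rw [hc, aux_zpow_sum _ (by norm_num : (-1 : F) ≠ 0)]
              refine Finset.prod_congr rfl fun i _ => ?_
              rw [aux_zpow_sum _ (by norm_num : (-1 : F) ≠ 0)]
              exact Finset.prod_congr rfl fun j _ => aux_sign_block (χ i j) (d i) (e j)
            · rw [Finset.prod_comm]
              refine Finset.prod_congr rfl fun j _ => Finset.prod_congr rfl fun i _ => ?_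
              rw [Finset.prod_comm, hχ j i]
    rw [hP]
    ring
  -- reindex the sum
  rw [Finset.mul_sum]
  refine Finset.sum_nbij' (fun σ => fun i => σ i * (ρ i)⁻¹) (fun τ => fun i => τ i * ρ i)
    ?_ ?_ ?_ ?_ ?_
  · intro σ hσ
    have hρinvEL : ∀ i l, (ρ i)⁻¹ (posEL i l) = posER i l := by
      intro i l; rw [← hρER i l, Equiv.Perm.inv_def, Equiv.symm_apply_apply]
    have hρinvDR : ∀ i k, (ρ i)⁻¹ (posDR i k) = posDL i k := by
      intro i k; rw [← hρDL i k, Equiv.Perm.inv_def, Equiv.symm_apply_apply]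
    simp only [Sh₁, Sh₂, Finset.mem_filter, Finset.mem_univ, true_and] at hσ ⊢
    intro i
    refine ⟨fun l l' h => ?_, fun k k' h => ?_⟩
    · simpa [Equiv.Perm.mul_apply, hρinvEL] using (hσ i).2 l l' h
    · simpa [Equiv.Perm.mul_apply, hρinvDR] using (hσ i).1 k k' h
  · intro τ hτ
    simp only [Sh₁, Sh₂, Finset.mem_filter, Finset.mem_univ, true_and] at hτ ⊢
    intro i
    refine ⟨fun k k' h => ?_, fun l l' h => ?_⟩
    · simpa [Equiv.Perm.mul_apply, hρDL] using (hτ i).2 k k' h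
    · simpa [Equiv.Perm.mul_apply, hρER] using (hτ i).1 l l' h
  · intro σ _; funext i; simp [mul_assoc]
  · intro τ _; funext i; simp [mul_assoc]
  · intro σ hσ
    have := key (fun i => σ i * (ρ i)⁻¹)
    simpa [mul_assoc] using this
end
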